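/- Let P₂ = x³·I₂·(d/dx) + M₀ where M₀ is the constant 2×2 matrix with rows (0,0) and (1,0) and I₂ is the 2×2 identity matrix. If v ∈ ℂ[[x]]² satisfies P₂v = g where g ∈ ℂ[[x]]² is convergent, then v is convergent; that is, P₂ is singular regular at 0. -/

import Mathlib

open PowerSeries

noncomputable section

/-- A formal power series is convergent if it has positive radius of convergence. -/
def PSConvergent (f : PowerSeries ℂ) : Prop :=
  ∃ r : ℝ, 0 < r ∧ Summable fun j : ℕ => ‖PowerSeries.coeff j f‖ * r ^ j

/-- The operator `P₂ = x³·I₂·(d/dx) + M₀`, `M₀ = !![0,0;1,0]`, acting on `ℂ[[x]]²`. -/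
def P2 (v : Fin 2 → PowerSeries ℂ) : Fin 2 → PowerSeries ℂ := fun b =>
  PowerSeries.X ^ 3 * PowerSeries.derivativeFun (v b) +
    ∑ c : Fin 2, PowerSeries.C ((!![0, 0; 1, 0] : Matrix (Fin 2) (Fin 2) ℂ) b c) * v c

end

lemma PSConvergent.sub {f g : PowerSeries ℂ} (hf : PSConvergent f) (hg : PSConvergent g) :
    PSConvergent (f - g) := by
  obtain ⟨r, hr, hs⟩ := hf
  obtain ⟨r', hr', hs'⟩ := hg
  have hm0 : (0 : ℝ) < min r r' := lt_min hr hr'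
  refine ⟨min r r', hm0, ?_⟩
  have h1 : Summable fun j : ℕ => ‖PowerSeries.coeff j f‖ * (min r r') ^ j :=
    hs.of_nonneg_of_le (fun j => by positivity)
      (fun j => mul_le_mul_of_nonneg_left
        (pow_le_pow_left₀ hm0.le (min_le_left _ _) j) (norm_nonneg _))
  have h2 : Summable fun j : ℕ => ‖PowerSeries.coeff j g‖ * (min r r') ^ j :=
    hs'.of_nonneg_of_le (fun j => by positivity)
      (fun j => mul_le_mul_of_nonneg_left
        (pow_le_pow_left₀ hm0.le (min_le_right _ _) j) (norm_nonneg _))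
  refine (h1.add h2).of_nonneg_of_le (fun j => by positivity) (fun j => ?_)
  rw [← add_mul]
  refine mul_le_mul_of_nonneg_right ?_ (pow_nonneg hm0.le j)
  rw [map_sub]
  exact norm_sub_le _ _

lemma key {f h : PowerSeries ℂ}
    (hf : PowerSeries.X ^ 3 * PowerSeries.derivativeFun f = h) (hh : PSConvergent h) :
    PSConvergent f := by
  obtain ⟨r, hr, hs⟩ := hh
  set s : ℝ := min r 1 with hsdef
  have hs0 : 0 < s := lt_min hr one_pos
  have hsr : s ≤ r := min_le_left _ _
  have hss : Summable fun j : ℕ => ‖PowerSeries.coeff j h‖ * s ^ j :=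
    hs.of_nonneg_of_le (fun j => by positivity)
      (fun j => mul_le_mul_of_nonneg_left (pow_le_pow_left₀ hs0.le hsr j) (norm_nonneg _))
  -- coefficient relation
  have hco : ∀ m : ℕ, PowerSeries.coeff (m + 3) h
      = PowerSeries.coeff (m + 1) f * (m + 1) := by
    intro m
    rw [← hf]
    have := PowerSeries.coeff_X_pow_mul (PowerSeries.derivativeFun f) 3 m
    rw [this]
    exact PowerSeries.coeff_derivative f m
  refine ⟨s, hs0, ?_⟩
  rw [← summable_nat_add_iff 1]
  have hsum3 : Summable fun m : ℕ =>
      s⁻¹ ^ 2 * (‖PowerSeries.coeff (m + 3) h‖ * s ^ (m + 3)) :=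
    ((summable_nat_add_iff 3).mpr hss).mul_left _
  refine hsum3.of_nonneg_of_le (fun m => by positivity) (fun m => ?_)
  have hb : ‖PowerSeries.coeff (m + 1) f‖ ≤ ‖PowerSeries.coeff (m + 3) h‖ := by
    rw [hco m, norm_mul]
    have h1 : (1 : ℝ) ≤ ‖((m : ℂ) + 1)‖ := by
      rw [show ((m : ℂ) + 1) = ((m + 1 : ℕ) : ℂ) by push_cast; ring, Complex.norm_natCast]
      exact_mod_cast Nat.one_le_iff_ne_zero.mpr (Nat.succ_ne_zero m)
    nlinarith [norm_nonneg (PowerSeries.coeff (m + 1) f)]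
  have hinv : s⁻¹ ^ 2 * (‖PowerSeries.coeff (m + 3) h‖ * s ^ (m + 3))
      = ‖PowerSeries.coeff (m + 3) h‖ * s ^ (m + 1) := by
    have h2 : s ^ (m + 3) = s ^ 2 * s ^ (m + 1) := by ring
    rw [h2]
    field_simp
  rw [hinv]
  exact mul_le_mul_of_nonneg_right hb (pow_nonneg hs0.le _)

/-- If `v ∈ ℂ[[x]]²` satisfies `P₂v = g` with `g` convergent, then `v` is convergent:
`P₂` is singular regular at `0`. -/
theorem P2_singular_regular (v g : Fin 2 → PowerSeries ℂ)
    (hvg : P2 v = g) (hg : ∀ b, PSConvergent (g b)) :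
    ∀ b, PSConvergent (v b) := by
  have eq0 := congrFun hvg 0
  have eq1 := congrFun hvg 1
  simp only [P2] at eq0 eq1
  have heq0 : PowerSeries.X ^ 3 * PowerSeries.derivativeFun (v 0) = g 0 := by
    simpa using eq0
  have heq1 : PowerSeries.X ^ 3 * PowerSeries.derivativeFun (v 1) = g 1 - v 0 := by
    simp [Fin.sum_univ_two] at eq1
    linear_combination eq1
  have hv0 : PSConvergent (v 0) := key heq0 (hg 0)
  have hv1 : PSConvergent (v 1) := key heq1 ((hg 1).sub hv0)
  intro b
  fin_cases b
  · exact hv0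
  · exact hv1
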